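/- arXiv:1305.0288 — 2 statements merged into one kernel-verified Lean document; each statement's English description precedes it below -/
import Mathlib

section
/- If 0 < β ≤ α/2 + 1, every solution of the system ṁ = -2(m + tanh(λ)), λ̇ = 2β(m + tanh(λ)) - αλ converges to the origin as t → ∞. -/
lemma aux_sinh_lt (x : ℝ) (hx : 0 < x) : Real.sinh x < x * Real.cosh x := by
  have h : StrictMonoOn (fun y => y * Real.cosh y - Real.sinh y) (Set.Ici 0) := by
    apply strictMonoOn_of_deriv_pos (convex_Ici 0)
    · exact ((continuous_id.mul Real.continuous_cosh).sub Real.continuous_sinh).continuousOn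
    · intro y hy
      rw [interior_Ici, Set.mem_Ioi] at hy
      have hd : HasDerivAt (fun y => y * Real.cosh y - Real.sinh y) (y * Real.sinh y) y := by
        have := ((hasDerivAt_id y).mul (Real.hasDerivAt_cosh y)).sub (Real.hasDerivAt_sinh y)
        refine this.congr_deriv ?_
        simp only [id_eq]
        ring
      rw [hd.deriv]
      exact mul_pos hy (Real.sinh_pos_iff.2 hy)
  have h0 := h Set.self_mem_Ici (Set.mem_Ici.2 hx.le) hx
  simp only [Real.sinh_zero, Real.cosh_zero, mul_one, zero_mul, sub_zero, zero_sub] at h0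
  linarith

lemma aux_tanh_lt (x : ℝ) (hx : 0 < x) : Real.tanh x < x := by
  rw [Real.tanh_eq_sinh_div_cosh, div_lt_iff₀ (Real.cosh_pos x)]
  exact aux_sinh_lt x hx

lemma aux_mul_tanh_lt (x : ℝ) (hx : x ≠ 0) : x * Real.tanh x < x ^ 2 := by
  rcases hx.lt_or_gt with h | h
  · have h1 := aux_tanh_lt (-x) (by linarith)
    rw [Real.tanh_neg] at h1
    nlinarith
  · nlinarith [aux_tanh_lt x h]

lemma aux_mul_tanh_le (x : ℝ) : x * Real.tanh x ≤ x ^ 2 := by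
  rcases eq_or_ne x 0 with h | h
  · simp [h]
  · exact (aux_mul_tanh_lt x h).le

lemma aux_tanh_nonneg (x : ℝ) (hx : 0 ≤ x) : 0 ≤ Real.tanh x := by
  rw [Real.tanh_eq_sinh_div_cosh]
  exact div_nonneg (Real.sinh_nonneg_iff.2 hx) (Real.cosh_pos x).le

lemma aux_abs_tanh_le (x : ℝ) : |Real.tanh x| ≤ |x| := by
  rcases le_or_gt 0 x with h | h
  · rw [abs_of_nonneg (aux_tanh_nonneg x h), abs_of_nonneg h]
    rcases h.eq_or_lt with rfl | h'
    · simp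
    · exact (aux_tanh_lt x h').le
  · have h1 : 0 ≤ -x := by linarith
    have h3 : Real.tanh x = -Real.tanh (-x) := by rw [Real.tanh_neg]; ring
    rw [abs_of_neg h, h3, abs_neg, abs_of_nonneg (aux_tanh_nonneg _ h1)]
    rcases h1.eq_or_lt with h2 | h2
    · simp [← h2]
    · exact (aux_tanh_lt (-x) h2).le

lemma aux_continuous_tanh : Continuous Real.tanh := by
  have h : Real.tanh = fun x => Real.sinh x / Real.cosh x :=
    funext fun x => Real.tanh_eq_sinh_div_cosh x
  rw [h]
  exact Real.continuous_sinh.div Real.continuous_cosh fun x => (Real.cosh_pos x).ne'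

/-- If 0 < β ≤ α/2 + 1, every solution of ṁ = -2(m + tanh λ),
λ̇ = 2β(m + tanh λ) - αλ converges to the origin as t → ∞. -/
theorem stmt_9 (α β : ℝ) (hα : 0 < α) (hβ : 0 < β) (hβα : β ≤ α / 2 + 1)
    (m l : ℝ → ℝ)
    (hm : ∀ t, HasDerivAt m (-2 * (m t + Real.tanh (l t))) t)
    (hl : ∀ t, HasDerivAt l (2 * β * (m t + Real.tanh (l t)) - α * l t) t) :
    Filter.Tendsto (fun t => (m t, l t)) Filter.atTop (nhds ((0 : ℝ), (0 : ℝ))) := by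
  have hα' : α ≠ 0 := ne_of_gt hα
  set u : ℝ → ℝ := fun t => β * m t + l t with hu_def
  set v : ℝ → ℝ := fun t => -α * l t with hv_def
  set f : ℝ → ℝ := fun w => (2 + α) * w - 2 * α * β * Real.tanh (w / α) with hf_def
  set E : ℝ → ℝ := fun t => (v t) ^ 2 + 2 * α * (u t) ^ 2 with hE_def
  -- derivatives
  have hu : ∀ t, HasDerivAt u (v t) t := by
    intro t
    have h := ((hm t).const_mul β).add (hl t)
    refine h.congr_deriv ?_
    simp only [hv_def]
    ring
  have hv : ∀ t, HasDerivAt v (-(2 * α) * u t - f (v t)) t := by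
    intro t
    have h := (hl t).const_mul (-α)
    have h2 : Real.tanh (v t / α) = -Real.tanh (l t) := by
      rw [show v t / α = -(l t) by simp only [hv_def]; field_simp; try ring, Real.tanh_neg]
    have heq : -α * (2 * β * (m t + Real.tanh (l t)) - α * l t) = -(2 * α) * u t - f (v t) := by
      simp only [hf_def]
      rw [h2]
      simp only [hu_def, hv_def]
      ring
    exact heq ▸ h
  have hE : ∀ t, HasDerivAt E (-2 * (v t * f (v t))) t := by
    intro t
    have h1 := (hv t).pow 2
    have h2 := ((hu t).pow 2).const_mul (2 * α)
    have h := h1.add h2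
    refine h.congr_deriv ?_
    push_cast
    ring
  clear_value u v f E
  -- the key sign inequality
  have hkey : ∀ w : ℝ, w ≠ 0 → 0 < w * f w := by
    intro w hw
    have hx : w / α ≠ 0 := div_ne_zero hw hα'
    have h1 : (w / α) * Real.tanh (w / α) < (w / α) ^ 2 := aux_mul_tanh_lt _ hx
    have hx2 : 0 < (w / α) ^ 2 := by positivity
    have h2b : 2 * β ≤ 2 + α := by linarith
    simp only [hf_def]
    have h5 : w * ((2 + α) * w - 2 * α * β * Real.tanh (w / α)) =
        α ^ 2 * ((2 + α) * (w / α) ^ 2 - 2 * β * ((w / α) * Real.tanh (w / α))) := by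
      field_simp
    rw [h5]
    have h4 : 0 < (2 + α) * (w / α) ^ 2 - 2 * β * ((w / α) * Real.tanh (w / α)) := by
      nlinarith [mul_lt_mul_of_pos_left h1 (by positivity : (0:ℝ) < 2 * β)]
    positivity
  have hkey0 : ∀ w : ℝ, 0 ≤ w * f w := by
    intro w
    rcases eq_or_ne w 0 with h | h
    · simp [h]
    · exact (hkey w h).le
  -- |f w| ≤ L |w|
  set L : ℝ := 2 + α + 2 * β with hL_def
  have hL : 0 < L := by simp only [hL_def]; linarith
  have hfabs : ∀ w : ℝ, |f w| ≤ L * |w| := by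
    intro w
    have h1 : |Real.tanh (w / α)| ≤ |w| / α := by
      have := aux_abs_tanh_le (w / α)
      rwa [abs_div, abs_of_pos hα] at this
    simp only [hf_def, hL_def]
    have h2 : |(2 + α) * w - 2 * α * β * Real.tanh (w / α)| ≤
        |(2 + α) * w| + |2 * α * β * Real.tanh (w / α)| := abs_sub _ _
    have h3 : |(2 + α) * w| = (2 + α) * |w| := by
      rw [abs_mul, abs_of_pos (by linarith : (0:ℝ) < 2 + α)]
    have h4 : |2 * α * β * Real.tanh (w / α)| = 2 * α * β * |Real.tanh (w / α)| := by
      rw [abs_mul, abs_of_pos (by positivity : (0:ℝ) < 2 * α * β)]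
    have h5 : 2 * α * β * |Real.tanh (w / α)| ≤ 2 * α * β * (|w| / α) :=
      mul_le_mul_of_nonneg_left h1 (by positivity)
    have h6 : 2 * α * β * (|w| / α) = 2 * β * |w| := by field_simp
    calc |(2 + α) * w - 2 * α * β * Real.tanh (w / α)|
        ≤ |(2 + α) * w| + |2 * α * β * Real.tanh (w / α)| := h2
      _ ≤ (2 + α) * |w| + 2 * β * |w| := by rw [h3, h4]; linarith
      _ = (2 + α + 2 * β) * |w| := by ring
  -- E is antitone, nonneg, has a limit
  have hEanti : Antitone E := by
    apply antitone_of_deriv_nonpos (fun t => (hE t).differentiableAt)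
    intro t
    rw [(hE t).deriv]
    have := hkey0 (v t)
    linarith
  have hEnonneg : ∀ t, 0 ≤ E t := by
    intro t
    simp only [hE_def]
    positivity
  clear_value L
  have hbdd : BddBelow (Set.range E) := ⟨0, by rintro x ⟨t, rfl⟩; exact hEnonneg t⟩
  set Einf : ℝ := ⨅ t, E t with hEinf_def
  have hEtend : Filter.Tendsto E Filter.atTop (nhds Einf) := tendsto_atTop_ciInf hEanti hbdd
  have hEinf_le : ∀ t, Einf ≤ E t := fun t => ciInf_le hbdd t
  have hEinf_nonneg : 0 ≤ Einf := le_ciInf hEnonneg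
  clear_value Einf
  -- Main claim: Einf = 0
  have hEinf0 : Einf = 0 := by
    by_contra hne
    have hpos : 0 < Einf := lt_of_le_of_ne hEinf_nonneg (Ne.symm hne)
    set B : ℝ := E 0 with hB_def
    clear_value B
    have hBpos : 0 < B := by rw [hB_def]; exact lt_of_lt_of_le hpos (hEinf_le 0)
    have hEinfB : Einf ≤ B := by rw [hB_def]; exact hEinf_le 0
    set M : ℝ := 1 + L ^ 2 / (4 * α) with hM_def
    clear_value M
    have hM : 0 < M := by
      have h0 : 0 < L ^ 2 / (4 * α) := by positivity
      rw [hM_def]; linarith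
    have young : ∀ A C : ℝ, A * (L * C) ≤ α * A ^ 2 + L ^ 2 / (4 * α) * C ^ 2 := by
      intro A C
      have hkey2 : α * A ^ 2 + L ^ 2 / (4 * α) * C ^ 2 - A * (L * C) =
          (2 * α * A - L * C) ^ 2 / (4 * α) := by
        field_simp
        ring
      rw [← sub_nonneg, hkey2]
      positivity
    set δ : ℝ := Einf / (4 * M + 2) with hδ_def
    clear_value δ
    have h42 : (0:ℝ) < 4 * M + 2 := by linarith
    have hδpos : 0 < δ := by rw [hδ_def]; exact div_pos hpos h42
    have hδE : δ * (2 * M + 1) = Einf / 2 := by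
      rw [hδ_def]
      field_simp [ne_of_gt h42]
      ring
    have hδle : δ ≤ Einf := by
      rw [hδ_def, div_le_iff₀ h42]
      linarith [mul_nonneg hpos.le (by linarith : (0:ℝ) ≤ 4 * M + 1)]
    have hδB : δ ≤ B := le_trans hδle hEinfB
    have hg_cont : ContinuousOn (fun w => w * f w) (Set.Icc (Real.sqrt δ) (Real.sqrt B)) := by
      apply Continuous.continuousOn
      simp only [hf_def]
      exact continuous_id.mul ((continuous_const.mul continuous_id).sub
        (continuous_const.mul (aux_continuous_tanh.comp (continuous_id.div_const α))))
    have hne2 : (Set.Icc (Real.sqrt δ) (Real.sqrt B)).Nonempty :=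
      ⟨Real.sqrt δ, Set.left_mem_Icc.2 (Real.sqrt_le_sqrt hδB)⟩
    obtain ⟨w₀, hw₀S, hw₀min⟩ := isCompact_Icc.exists_isMinOn hne2 hg_cont
    set μ : ℝ := w₀ * f w₀ with hμ_def
    clear_value μ
    have hw₀pos : 0 < w₀ := lt_of_lt_of_le (Real.sqrt_pos.2 hδpos) hw₀S.1
    have hμpos : 0 < μ := by rw [hμ_def]; exact hkey w₀ (ne_of_gt hw₀pos)
    have hμle : ∀ w, δ ≤ w ^ 2 → w ^ 2 ≤ B → μ ≤ w * f w := by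
      intro w h1 h2
      have habs1 : Real.sqrt δ ≤ |w| := by
        rw [← Real.sqrt_sq_eq_abs]; exact Real.sqrt_le_sqrt h1
      have habs2 : |w| ≤ Real.sqrt B := by
        rw [← Real.sqrt_sq_eq_abs]; exact Real.sqrt_le_sqrt h2
      have hmem : |w| ∈ Set.Icc (Real.sqrt δ) (Real.sqrt B) := ⟨habs1, habs2⟩
      have h3 : w₀ * f w₀ ≤ |w| * f |w| := isMinOn_iff.1 hw₀min _ hmem
      have heven : |w| * f |w| = w * f w := by
        rcases abs_cases w with ⟨h4, h5⟩ | ⟨h4, h5⟩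
        · rw [h4]
        · rw [h4]
          simp only [hf_def]
          rw [show -w / α = -(w / α) by ring, Real.tanh_neg]
          ring
      rw [heven] at h3
      rw [hμ_def]
      exact h3
    set ε : ℝ := min 1 (μ / (M * B)) with hε_def
    clear_value ε
    have hεpos : 0 < ε := by
      rw [hε_def]; exact lt_min one_pos (div_pos hμpos (mul_pos hM hBpos))
    have hε1 : ε ≤ 1 := by rw [hε_def]; exact min_le_left _ _
    have hεMB : ε * (M * B) ≤ μ := by
      rw [← le_div_iff₀ (mul_pos hM hBpos), hε_def]
      exact min_le_right _ _
    set c : ℝ := min (ε * Einf / 4) μ with hc_def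
    clear_value c
    have hcpos : 0 < c := by rw [hc_def]; exact lt_min (by positivity) hμpos
    set W : ℝ → ℝ := fun t => E t + ε * (u t * v t) with hW_def
    set Wd : ℝ → ℝ := fun t => -2 * (v t * f (v t)) +
      ε * (v t * v t + u t * (-(2 * α) * u t - f (v t))) with hWd_def
    have hW : ∀ t, HasDerivAt W (Wd t) t := by
      intro t
      have h1 := ((hu t).mul (hv t)).const_mul ε
      have h2 := (hE t).add h1
      exact h2
    clear_value W Wd
    have hbound : ∀ t, 0 ≤ t → Wd t ≤ -c := by
      intro t ht
      have hEt_le : E t ≤ B := by rw [hB_def]; exact hEanti ht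
      have hEt_ge : Einf ≤ E t := hEinf_le t
      have hEt_eq : E t = v t ^ 2 + 2 * α * u t ^ 2 := by simp only [hE_def]
      have h2α : (0:ℝ) ≤ 2 * α := by linarith
      have h2au : 2 * α * u t ^ 2 ≤ B := by linarith [sq_nonneg (v t)]
      have hv2B : v t ^ 2 ≤ B := by
        linarith [mul_nonneg h2α (sq_nonneg (u t))]
      have habs : -(α * u t ^ 2 + L ^ 2 / (4 * α) * v t ^ 2) ≤ u t * f (v t) := by
        have h1 : -(u t * f (v t)) ≤ |u t * f (v t)| := neg_le_abs _
        have h2 : |u t * f (v t)| = |u t| * |f (v t)| := abs_mul _ _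
        have h3 : |u t| * |f (v t)| ≤ |u t| * (L * |v t|) :=
          mul_le_mul_of_nonneg_left (hfabs (v t)) (abs_nonneg _)
        have h4 := young |u t| |v t|
        rw [sq_abs, sq_abs] at h4
        linarith [h1, h2, h3, h4]
      have hmaster : Wd t ≤ -2 * (v t * f (v t)) + ε * M * v t ^ 2 - ε * α * u t ^ 2 := by
        rw [hWd_def, hM_def]
        linarith [mul_le_mul_of_nonneg_left habs hεpos.le]
      by_cases hcase : v t ^ 2 ≤ δ
      · have hvf : 0 ≤ v t * f (v t) := hkey0 _
        have hu2 : Einf - δ ≤ 2 * α * u t ^ 2 := by linarith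
        have hA := mul_le_mul_of_nonneg_left hcase (by positivity : (0:ℝ) ≤ ε * M)
        have hB2 := mul_le_mul_of_nonneg_left hu2 hεpos.le
        have hC := congrArg (fun x => ε * x) hδE
        have hfinal : Wd t ≤ -(ε * Einf / 4) := by linarith [hA, hB2, hC, hvf, hmaster]
        have hcle : c ≤ ε * Einf / 4 := by rw [hc_def]; exact min_le_left _ _
        linarith
      · push_neg at hcase
        have hgv : μ ≤ v t * f (v t) := hμle (v t) hcase.le hv2B
        have hA := mul_le_mul_of_nonneg_left hv2B (by positivity : (0:ℝ) ≤ ε * M)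
        have hfinal : Wd t ≤ -μ := by
          linarith [hA, hgv, hmaster, hεMB,
            mul_nonneg (mul_nonneg hεpos.le hα.le) (sq_nonneg (u t))]
        have hcle : c ≤ μ := by rw [hc_def]; exact min_le_right _ _
        linarith
    have hWc : ∀ t, HasDerivAt (fun s => W s + c * s) (Wd t + c) t := by
      intro t
      have h1 := (hW t).add ((hasDerivAt_id t).const_mul c)
      refine h1.congr_deriv ?_
      ring
    have hanti : AntitoneOn (fun s => W s + c * s) (Set.Ici 0) := by
      apply antitoneOn_of_deriv_nonpos (convex_Ici 0)
      · have hcont : Continuous (fun s => W s + c * s) := by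
          rw [continuous_iff_continuousAt]
          exact fun t => (hWc t).differentiableAt.continuousAt
        exact hcont.continuousOn
      · intro x _
        exact (hWc x).differentiableAt.differentiableWithinAt
      · intro x hx
        rw [interior_Ici, Set.mem_Ioi] at hx
        rw [(hWc x).deriv]
        have := hbound x hx.le
        linarith
    have hWlow : ∀ t, 0 ≤ t → -(B / (2 * α) + B) / 2 ≤ W t := by
      intro t ht
      have hEt_le : E t ≤ B := by rw [hB_def]; exact hEanti ht
      have hEt_eq : E t = v t ^ 2 + 2 * α * u t ^ 2 := by simp only [hE_def]
      have hE0 : 0 ≤ E t := hEnonneg t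
      have h2α : (0:ℝ) ≤ 2 * α := by linarith
      have h1ε : (0:ℝ) ≤ 1 - ε := by linarith
      have h2au : 2 * α * u t ^ 2 ≤ B := by linarith [sq_nonneg (v t)]
      have hu2 : u t ^ 2 ≤ B / (2 * α) := by
        rw [le_div_iff₀ (by linarith : (0:ℝ) < 2 * α)]
        linarith [h2au]
      have hv2 : v t ^ 2 ≤ B := by
        linarith [mul_nonneg h2α (sq_nonneg (u t))]
      have hprod : -(u t ^ 2 + v t ^ 2) / 2 ≤ ε * (u t * v t) := by
        linarith [mul_nonneg h1ε
            (add_nonneg (sq_nonneg (u t)) (sq_nonneg (v t))),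
          mul_nonneg hεpos.le (sq_nonneg (u t + v t))]
      simp only [hW_def]
      linarith
    set T : ℝ := max 1 ((W 0 + (B / (2 * α) + B) / 2 + 1) / c) with hT_def
    clear_value T
    have hT0 : (0:ℝ) ≤ T := by rw [hT_def]; exact le_trans zero_le_one (le_max_left _ _)
    have h1 : W T + c * T ≤ W 0 + c * 0 := hanti Set.self_mem_Ici (Set.mem_Ici.2 hT0) hT0
    have h2 : -(B / (2 * α) + B) / 2 ≤ W T := hWlow T hT0
    have h3 : (W 0 + (B / (2 * α) + B) / 2 + 1) / c ≤ T := by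
      rw [hT_def]; exact le_max_right _ _
    have h4 : W 0 + (B / (2 * α) + B) / 2 + 1 ≤ c * T := by
      rw [div_le_iff₀ hcpos] at h3
      linarith
    linarith
  -- conclude
  have hEto0 : Filter.Tendsto E Filter.atTop (nhds 0) := hEinf0 ▸ hEtend
  have hsqrt : Filter.Tendsto (fun t => Real.sqrt (E t)) Filter.atTop (nhds 0) := by
    have := (Real.continuous_sqrt.tendsto' 0 0 Real.sqrt_zero).comp hEto0
    exact this
  have hsqrtneg : Filter.Tendsto (fun t => -Real.sqrt (E t)) Filter.atTop (nhds 0) := by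
    simpa using hsqrt.neg
  have hv0 : Filter.Tendsto v Filter.atTop (nhds 0) := by
    apply tendsto_of_tendsto_of_tendsto_of_le_of_le hsqrtneg hsqrt
    · intro t
      show -Real.sqrt (E t) ≤ v t
      have h1 : |v t| ≤ Real.sqrt (E t) := by
        apply Real.abs_le_sqrt
        have := hEnonneg t
        simp only [hE_def] at *
        nlinarith [sq_nonneg (u t)]
      linarith [neg_abs_le (v t), (abs_le.1 h1).1]
    · intro t
      show v t ≤ Real.sqrt (E t)
      have h1 : |v t| ≤ Real.sqrt (E t) := by
        apply Real.abs_le_sqrt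
        simp only [hE_def]
        nlinarith [sq_nonneg (u t), hα.le]
      exact le_trans (le_abs_self _) h1
  have hu0 : Filter.Tendsto u Filter.atTop (nhds 0) := by
    have hdiv : Filter.Tendsto (fun t => Real.sqrt (E t / (2 * α))) Filter.atTop (nhds 0) := by
      have h1 : Filter.Tendsto (fun t => E t / (2 * α)) Filter.atTop (nhds 0) := by
        have := hEto0.div_const (2 * α)
        simpa using this
      have := (Real.continuous_sqrt.tendsto' 0 0 Real.sqrt_zero).comp h1
      exact this
    have hdivneg : Filter.Tendsto (fun t => -Real.sqrt (E t / (2 * α))) Filter.atTop (nhds 0) := by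
      simpa using hdiv.neg
    apply tendsto_of_tendsto_of_tendsto_of_le_of_le hdivneg hdiv
    · intro t
      show -Real.sqrt (E t / (2 * α)) ≤ u t
      have h1 : |u t| ≤ Real.sqrt (E t / (2 * α)) := by
        apply Real.abs_le_sqrt
        rw [le_div_iff₀ (by linarith : (0:ℝ) < 2 * α)]
        simp only [hE_def]
        nlinarith [sq_nonneg (v t)]
      linarith [(abs_le.1 h1).1]
    · intro t
      show u t ≤ Real.sqrt (E t / (2 * α))
      have h1 : |u t| ≤ Real.sqrt (E t / (2 * α)) := by
        apply Real.abs_le_sqrt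
        rw [le_div_iff₀ (by linarith : (0:ℝ) < 2 * α)]
        simp only [hE_def]
        nlinarith [sq_nonneg (v t)]
      exact le_trans (le_abs_self _) h1
  have hl0 : Filter.Tendsto l Filter.atTop (nhds 0) := by
    have h1 : Filter.Tendsto (fun t => (-1 / α) * v t) Filter.atTop (nhds ((-1 / α) * 0)) :=
      hv0.const_mul _
    rw [mul_zero] at h1
    have heq : (fun t => (-1 / α) * v t) = l := by
      funext t
      simp only [hv_def]
      field_simp
      try ring
    rwa [heq] at h1
  have hm0 : Filter.Tendsto m Filter.atTop (nhds 0) := by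
    have h1 : Filter.Tendsto (fun t => (1 / β) * (u t - l t)) Filter.atTop
        (nhds ((1 / β) * (0 - 0))) := (hu0.sub hl0).const_mul _
    rw [show (1 / β : ℝ) * (0 - 0) = 0 by ring] at h1
    have heq : (fun t => (1 / β) * (u t - l t)) = m := by
      funext t
      simp only [hu_def]
      field_simp
      try ring
    rwa [heq] at h1
  exact hm0.prodMk_nhds hl0
end

section
/- The function q((s, λ), u) = -2h(s)·1_{(0, 1 + h(s)tanh(λ))}(u), with h(s) = max(-1, min(s, 1)), satisfies the L¹ Lipschitz estimate: for all (s,λ), (s',λ') ∈ ℝ², ∫₀² |q((s,λ),u) - q((s',λ'),u)| du ≤ 6(|s - s'| + |λ - λ'|). -/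
open MeasureTheory Real

lemma abs_sinh_le_cosh (x : ℝ) : |Real.sinh x| ≤ Real.cosh x := by
  have h := Real.cosh_sq_sub_sinh_sq x
  have h2 := Real.cosh_pos x
  rw [abs_le]; constructor <;> nlinarith

lemma abs_tanh_le_one (x : ℝ) : |Real.tanh x| ≤ 1 := by
  rw [Real.tanh_eq_sinh_div_cosh, abs_div, abs_of_pos (Real.cosh_pos x),
    div_le_one (Real.cosh_pos x)]
  exact abs_sinh_le_cosh x

lemma tanh_hasDerivAt (x : ℝ) : HasDerivAt Real.tanh (1 / Real.cosh x ^ 2) x := by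
  have h := (Real.hasDerivAt_sinh x).div (Real.hasDerivAt_cosh x) (Real.cosh_pos x).ne'
  have he : Real.tanh = fun y => Real.sinh y / Real.cosh y := by
    funext y; exact Real.tanh_eq_sinh_div_cosh y
  rw [he]
  refine h.congr_deriv ?_
  have := Real.cosh_sq_sub_sinh_sq x
  rw [div_left_inj' (by positivity)]
  nlinarith

lemma tanh_lipschitz (x y : ℝ) : |Real.tanh x - Real.tanh y| ≤ |x - y| := by
  have hl : LipschitzWith 1 Real.tanh := by
    rw [← lipschitzOnWith_univ]
    apply Convex.lipschitzOnWith_of_nnnorm_hasDerivWithin_le convex_univ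
      (f' := fun x => 1 / Real.cosh x ^ 2)
      (fun z _ => (tanh_hasDerivAt z).hasDerivWithinAt)
    intro z _
    have h1 : (1:ℝ) ≤ Real.cosh z ^ 2 := by nlinarith [Real.one_le_cosh z]
    have : ‖(1:ℝ) / Real.cosh z ^ 2‖ ≤ 1 := by
      rw [Real.norm_eq_abs, abs_of_pos (by positivity), div_le_one (by positivity)]
      exact h1
    exact_mod_cast this
  have := hl.dist_le_mul x y
  simpa [Real.dist_eq] using this

lemma trunc_lipschitz (s s' : ℝ) :
    |max (-1) (min s 1) - max (-1) (min s' 1)| ≤ |s - s'| := by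
  rw [max_comm (-1) _, max_comm (-1) _]
  refine le_trans (abs_max_sub_max_le_abs _ _ _) ?_
  refine le_trans (abs_min_sub_min_le_max s 1 s' 1) ?_
  simp

lemma abs_trunc_le_one (s : ℝ) : |max (-1) (min s 1)| ≤ 1 := by
  rw [abs_le]
  constructor
  · exact le_max_left _ _
  · exact max_le (by norm_num) (min_le_right _ _)

/-- The jump coefficient q((s,λ),u) = -2 h(s) 1_{(0, 1 + h(s) tanh λ)}(u),
h(s) = (-1) ∨ (s ∧ 1), satisfies the L¹ Lipschitz estimate
∫₀² |q((s,λ),u) - q((s',λ'),u)| du ≤ 6(|s - s'| + |λ - λ'|). -/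
theorem stmt_13
    (h : ℝ → ℝ) (hh : h = fun s => max (-1) (min s 1))
    (q : ℝ × ℝ → ℝ → ℝ)
    (hq : q = fun p u => -2 * h p.1 *
      Set.indicator (Set.Ioo 0 (1 + h p.1 * Real.tanh p.2)) (fun _ => (1 : ℝ)) u) :
    ∀ s l s' l' : ℝ,
      ∫ u in Set.Ioo (0 : ℝ) 2, |q (s, l) u - q (s', l') u|
        ≤ 6 * (|s - s'| + |l - l'|) := by
  subst hh hq
  intro s l s' l'
  simp only
  set hs : ℝ := max (-1) (min s 1) with hhs
  set hs' : ℝ := max (-1) (min s' 1) with hhs'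
  set a : ℝ := 1 + hs * Real.tanh l with hA
  set a' : ℝ := 1 + hs' * Real.tanh l' with hA'
  set c : ℝ := -2 * hs with hcdef
  set c' : ℝ := -2 * hs' with hcdef'
  have habs : |hs| ≤ 1 := abs_trunc_le_one s
  have habs' : |hs'| ≤ 1 := abs_trunc_le_one s'
  have hhl : |hs - hs'| ≤ |s - s'| := trunc_lipschitz s s'
  have haa : |a - a'| ≤ |s - s'| + |l - l'| := by
    have he : a - a' = (hs - hs') * Real.tanh l' + hs * (Real.tanh l - Real.tanh l') := by
      rw [hA, hA']; ring
    rw [he]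
    refine le_trans (abs_add_le _ _) (add_le_add ?_ ?_)
    · have h1 := mul_le_mul hhl (abs_tanh_le_one l') (abs_nonneg _) (abs_nonneg _)
      rw [abs_mul]; linarith
    · have h1 := mul_le_mul habs (tanh_lipschitz l l') (abs_nonneg _) zero_le_one
      rw [abs_mul]; linarith
  have hcc : |c - c'| ≤ 2 * |s - s'| := by
    have : c - c' = -2 * (hs - hs') := by rw [hcdef, hcdef']; ring
    rw [this, abs_mul]
    calc |(-2 : ℝ)| * |hs - hs'| = 2 * |hs - hs'| := by norm_num
      _ ≤ 2 * |s - s'| := by linarith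
  set A : Set ℝ := Set.Ioo 0 a
  set A' : Set ℝ := Set.Ioo 0 a'
  set I : Set ℝ := Set.Icc (min a a') (max a a')
  set S : Set ℝ := Set.Ioo (0:ℝ) 2
  -- integrability
  have hvA : volume A < ⊤ := measure_Ioo_lt_top
  have hvA' : volume A' < ⊤ := measure_Ioo_lt_top
  have hvI : volume I < ⊤ := measure_Icc_lt_top
  have iA : Integrable (A.indicator (fun _ => (1:ℝ))) := by
    rw [integrable_indicator_iff measurableSet_Ioo]
    exact integrableOn_const hvA.ne
  have iA' : Integrable (A'.indicator (fun _ => (1:ℝ))) := by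
    rw [integrable_indicator_iff measurableSet_Ioo]
    exact integrableOn_const hvA'.ne
  have iI : Integrable (I.indicator (fun _ => (1:ℝ))) := by
    rw [integrable_indicator_iff measurableSet_Icc]
    exact integrableOn_const hvI.ne
  have if1 : Integrable (fun u => |c * A.indicator (fun _ => (1:ℝ)) u
      - c' * A'.indicator (fun _ => (1:ℝ)) u|) := by
    exact ((iA.const_mul c).sub (iA'.const_mul c')).abs
  have iG1 : Integrable (fun u => |c - c'| * A.indicator (fun _ => (1:ℝ)) u) :=
    iA.const_mul _
  have iG2 : Integrable (fun u => 2 * I.indicator (fun _ => (1:ℝ)) u) :=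
    iI.const_mul _
  -- pointwise bound
  have key : ∀ u, |c * A.indicator (fun _ => (1:ℝ)) u - c' * A'.indicator (fun _ => (1:ℝ)) u|
      ≤ |c - c'| * A.indicator (fun _ => (1:ℝ)) u + 2 * I.indicator (fun _ => (1:ℝ)) u := by
    intro u
    have hc2 : |c| ≤ 2 := by
      rw [hcdef, abs_mul, abs_neg, abs_two]; linarith
    have hc2' : |c'| ≤ 2 := by
      rw [hcdef', abs_mul, abs_neg, abs_two]; linarith
    by_cases hu : u ∈ A <;> by_cases hu' : u ∈ A'
    · have hI : (0:ℝ) ≤ I.indicator (fun _ => (1:ℝ)) u := Set.indicator_nonneg (by intro _ _; norm_num) u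
      simp only [Set.indicator_of_mem hu, Set.indicator_of_mem hu', mul_one]
      nlinarith [abs_sub_abs_le_abs_sub c c', abs_sub (c) (c')]
    · have huI : u ∈ I := by
        obtain ⟨h1, h2⟩ := hu
        have h3 : a' ≤ u := by
          by_contra hcon
          exact hu' ⟨h1, lt_of_not_ge hcon⟩
        exact ⟨le_trans (min_le_right _ _) h3, le_trans (le_of_lt h2) (le_max_left _ _)⟩
      simp only [Set.indicator_of_mem hu, Set.indicator_of_notMem hu',
        Set.indicator_of_mem huI, mul_one, mul_zero, sub_zero]
      have : (0:ℝ) ≤ |c - c'| := abs_nonneg _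
      linarith
    · have huI : u ∈ I := by
        obtain ⟨h1, h2⟩ := hu'
        have h3 : a ≤ u := by
          by_contra hcon
          exact hu ⟨h1, lt_of_not_ge hcon⟩
        exact ⟨le_trans (min_le_left _ _) h3, le_trans (le_of_lt h2) (le_max_right _ _)⟩
      simp only [Set.indicator_of_notMem hu, Set.indicator_of_mem hu',
        Set.indicator_of_mem huI, mul_one, mul_zero, zero_sub, abs_neg]
      have : (0:ℝ) ≤ |c - c'| := abs_nonneg _
      nlinarith [abs_nonneg (c - c')]
    · have hI : (0:ℝ) ≤ I.indicator (fun _ => (1:ℝ)) u :=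
        Set.indicator_nonneg (fun _ _ => zero_le_one) u
      simp only [Set.indicator_of_notMem hu, Set.indicator_of_notMem hu',
        mul_zero, sub_zero, abs_zero, zero_add]
      linarith
  -- integral computation
  have step1 : ∫ u in S, |c * A.indicator (fun _ => (1:ℝ)) u - c' * A'.indicator (fun _ => (1:ℝ)) u|
      ≤ ∫ u in S, (|c - c'| * A.indicator (fun _ => (1:ℝ)) u + 2 * I.indicator (fun _ => (1:ℝ)) u) :=
    integral_mono if1.integrableOn (iG1.add iG2).integrableOn key
  have splitG : ∫ u in S, (|c - c'| * A.indicator (fun _ => (1:ℝ)) u + 2 * I.indicator (fun _ => (1:ℝ)) u)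
      = |c - c'| * (volume (S ∩ A)).toReal + 2 * (volume (S ∩ I)).toReal := by
    rw [integral_add iG1.integrableOn iG2.integrableOn, integral_const_mul, integral_const_mul,
      setIntegral_indicator measurableSet_Ioo, setIntegral_indicator measurableSet_Icc,
      setIntegral_const, setIntegral_const]
    simp
    rfl
  have hm1 : (volume (S ∩ A)).toReal ≤ 2 := by
    refine ENNReal.toReal_le_of_le_ofReal (by norm_num) ?_
    calc volume (S ∩ A) ≤ volume S := measure_mono Set.inter_subset_left
      _ = ENNReal.ofReal 2 := by rw [Real.volume_Ioo]; norm_num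
  have hm2 : (volume (S ∩ I)).toReal ≤ |a - a'| := by
    refine ENNReal.toReal_le_of_le_ofReal (abs_nonneg _) ?_
    calc volume (S ∩ I) ≤ volume I := measure_mono Set.inter_subset_right
      _ = ENNReal.ofReal (max a a' - min a a') := Real.volume_Icc
      _ = ENNReal.ofReal |a - a'| := by rw [max_sub_min_eq_abs, abs_sub_comm]
  have hnn1 : (0:ℝ) ≤ (volume (S ∩ A)).toReal := ENNReal.toReal_nonneg
  have hnn2 : (0:ℝ) ≤ (volume (S ∩ I)).toReal := ENNReal.toReal_nonneg
  calc ∫ u in S, |c * A.indicator (fun _ => (1:ℝ)) u - c' * A'.indicator (fun _ => (1:ℝ)) u|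
      ≤ |c - c'| * (volume (S ∩ A)).toReal + 2 * (volume (S ∩ I)).toReal := by
        rw [← splitG]; exact step1
    _ ≤ 6 * (|s - s'| + |l - l'|) := by
        nlinarith [abs_nonneg (c - c'), abs_nonneg (s - s'), abs_nonneg (l - l'), abs_nonneg (a - a')]
end
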